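/- Let p ≥ 2 and n ≥ 1 (p real, n an integer), let φ(t) = t|t|^{p-2}, and let f : ℝ → ℝ be continuously differentiable. Let u ∈ C²([0,1]) satisfy (φ(u'(r)))' + ((n-1)/r) φ(u'(r)) + f(u(r)) = 0 for 0 < r < 1, and let ψ ∈ C²([0,1]). Then the function v(r) = ψ(r) u'(r) satisfies, for 0 < r < 1, (φ'(u'(r)) v'(r))' + ((n-1)/r) φ'(u'(r)) v'(r) + f'(u(r)) v(r) = − p ψ'(r) f(u(r)) + φ(u'(r)) L_p[ψ](r) / r², where L_p[ψ](r) = (p−1) r² ψ''(r) − (n−1) r ψ'(r) + (n−1) ψ(r). -/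

import Mathlib

open Set Real Filter


lemma phi_hasDerivAt (p : ℝ) (hp : 2 ≤ p) (t : ℝ) :
    HasDerivAt (fun s : ℝ => s * |s| ^ (p - 2)) ((p - 1) * |t| ^ (p - 2)) t := by
  rcases lt_trichotomy t 0 with ht | rfl | ht
  · have h0 : HasDerivAt (fun s : ℝ => -s) (-1 : ℝ) t := (hasDerivAt_id t).neg
    have h2 : HasDerivAt (fun x : ℝ => x ^ (p - 1)) ((p - 1) * (-t) ^ (p - 1 - 1)) (-t) :=
      Real.hasDerivAt_rpow_const (Or.inl (by linarith))
    have h3 := (h2.comp t h0).neg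
    have h4 : HasDerivAt (fun s : ℝ => -((-s) ^ (p - 1))) ((p - 1) * |t| ^ (p - 2)) t := by
      have h5 : HasDerivAt (fun s : ℝ => -((-s) ^ (p - 1))) (-((p - 1) * (-t) ^ (p - 1 - 1) * -1)) t := h3
      convert h5 using 1
      rw [abs_of_neg ht]; ring_nf
    refine h4.congr_of_eventuallyEq ?_
    filter_upwards [eventually_lt_nhds ht] with s hs
    have hns : (0:ℝ) < -s := by linarith
    rw [abs_of_neg hs, show p - 1 = (p - 2) + 1 by ring, Real.rpow_add hns, Real.rpow_one]
    ring
  · rcases eq_or_lt_of_le hp with hp2 | hp2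
    · have he : (fun s : ℝ => s * |s| ^ (p - 2)) = fun s : ℝ => s := by
        funext s; rw [← hp2]; norm_num
      rw [he, ← hp2]
      norm_num
      exact hasDerivAt_id 0
    · have h0 : |(0:ℝ)| ^ (p - 2) = 0 := by
        rw [abs_zero, Real.zero_rpow (by linarith)]
      rw [hasDerivAt_iff_tendsto_slope, h0, mul_zero]
      have heq : ∀ s ∈ ({(0:ℝ)}ᶜ : Set ℝ), |s| ^ (p - 2) = slope (fun s : ℝ => s * |s| ^ (p - 2)) 0 s := by
        intro s hs
        have hs0 : s ≠ 0 := by simpa using hs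
        rw [slope_def_field]
        field_simp
        simp
      have hc : ContinuousAt (fun s : ℝ => |s| ^ (p - 2)) 0 :=
        (Real.continuousAt_rpow_const _ _ (Or.inr (by linarith))).comp continuous_abs.continuousAt
      have hc' : Tendsto (fun s : ℝ => |s| ^ (p - 2)) (nhdsWithin 0 {(0:ℝ)}ᶜ) (nhds 0) := by
        have hz : (0:ℝ) ^ (p - 2) = 0 := Real.zero_rpow (by linarith)
        have := hc.continuousWithinAt (s := {(0:ℝ)}ᶜ)
        simpa [ContinuousWithinAt, hz] using this
      exact Tendsto.congr' (eventually_nhdsWithin_of_forall heq) hc' 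
  · have h2 : HasDerivAt (fun x : ℝ => x ^ (p - 1)) ((p - 1) * t ^ (p - 1 - 1)) t :=
      Real.hasDerivAt_rpow_const (Or.inl (by linarith))
    have h4 : HasDerivAt (fun x : ℝ => x ^ (p - 1)) ((p - 1) * |t| ^ (p - 2)) t := by
      rw [abs_of_pos ht, show p - 2 = p - 1 - 1 by ring]; exact h2
    refine h4.congr_of_eventuallyEq ?_
    filter_upwards [eventually_gt_nhds ht] with s hs
    rw [abs_of_pos hs, show p - 1 = (p - 2) + 1 by ring, Real.rpow_add hs, Real.rpow_one]
    ring


/-- The linearization lemma for the p-Laplace equation (equation (3.4)).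
`φ(t) = t|t|^{p-2}`, `φ'(t) = (p-1)|t|^{p-2}` (denoted `φd`), `u` is C² on
`[0,1]` solving `(φ(u'))' + ((n-1)/r) φ(u') + f(u) = 0` on `(0,1)`, and
`ψ` is C² on `[0,1]`.  Then `v = ψ u'` (with `v' = ψ' u' + ψ u''`) satisfies
`(φ'(u') v')' + ((n-1)/r) φ'(u') v' + f'(u) v
  = -p ψ' f(u) + φ(u') L_p[ψ] / r²` on `(0,1)`,
where `L_p[ψ] = (p-1) r² ψ'' - (n-1) r ψ' + (n-1) ψ`. -/
theorem pLaplace_linearization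
    (p : ℝ) (hp : 2 ≤ p) (n : ℕ) (hn : 1 ≤ n)
    (φ φd : ℝ → ℝ)
    (hφ : ∀ t : ℝ, φ t = t * |t| ^ (p - 2))
    (hφd : ∀ t : ℝ, φd t = (p - 1) * |t| ^ (p - 2))
    (f : ℝ → ℝ) (hf : ContDiff ℝ 1 f)
    (u u' u'' : ℝ → ℝ)
    (hu : ∀ r ∈ Icc (0:ℝ) 1, HasDerivAt u (u' r) r)
    (hu' : ∀ r ∈ Icc (0:ℝ) 1, HasDerivAt u' (u'' r) r)
    (hu''c : ContinuousOn u'' (Icc (0:ℝ) 1))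
    (ψ ψ' ψ'' : ℝ → ℝ)
    (hψ : ∀ r ∈ Icc (0:ℝ) 1, HasDerivAt ψ (ψ' r) r)
    (hψ' : ∀ r ∈ Icc (0:ℝ) 1, HasDerivAt ψ' (ψ'' r) r)
    (hψ''c : ContinuousOn ψ'' (Icc (0:ℝ) 1))
    (hode : ∀ r ∈ Ioo (0:ℝ) 1,
      deriv (fun s => φ (u' s)) r + ((n : ℝ) - 1) / r * φ (u' r) + f (u r) = 0) :
    ∀ r ∈ Ioo (0:ℝ) 1,
      deriv (fun s => φd (u' s) * (ψ' s * u' s + ψ s * u'' s)) r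
          + ((n : ℝ) - 1) / r * (φd (u' r) * (ψ' r * u' r + ψ r * u'' r))
          + deriv f (u r) * (ψ r * u' r)
        = -p * ψ' r * f (u r)
          + φ (u' r)
            * ((p - 1) * r ^ 2 * ψ'' r - ((n : ℝ) - 1) * r * ψ' r
                + ((n : ℝ) - 1) * ψ r) / r ^ 2 := by
  have hφD : ∀ t : ℝ, HasDerivAt φ (φd t) t := by
    intro t
    have hfun : φ = fun s : ℝ => s * |s| ^ (p - 2) := funext hφ
    rw [hφd t, hfun]
    exact phi_hasDerivAt p hp t
  have hA : ∀ s ∈ Icc (0:ℝ) 1, HasDerivAt (fun s => φ (u' s)) (φd (u' s) * u'' s) s :=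
    fun s hs => (hφD (u' s)).comp s (hu' s hs)
  have hode' : ∀ s ∈ Ioo (0:ℝ) 1,
      φd (u' s) * u'' s = -(((n:ℝ) - 1) / s * φ (u' s)) - f (u s) := by
    intro s hs
    have h := hode s hs
    rw [(hA s (Ioo_subset_Icc_self hs)).deriv] at h
    linarith
  have key : ∀ s ∈ Ioo (0:ℝ) 1,
      φd (u' s) * (ψ' s * u' s + ψ s * u'' s)
        = (p - 1) * ψ' s * φ (u' s)
          + ψ s * (-(((n:ℝ) - 1) / s * φ (u' s)) - f (u s)) := by
    intro s hs
    have h1 : u' s * φd (u' s) = (p - 1) * φ (u' s) := by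
      rw [hφ, hφd]; ring
    have h2 := hode' s hs
    linear_combination ψ' s * h1 + ψ s * h2
  intro r hr
  have hr0 : (0:ℝ) < r := hr.1
  have hrI : r ∈ Icc (0:ℝ) 1 := Ioo_subset_Icc_self hr
  have hev : (fun s => φd (u' s) * (ψ' s * u' s + ψ s * u'' s)) =ᶠ[nhds r]
      (fun s => (p - 1) * ψ' s * φ (u' s)
        + ψ s * (-(((n:ℝ) - 1) / s * φ (u' s)) - f (u s))) := by
    filter_upwards [Ioo_mem_nhds hr.1 hr.2] with s hs using key s hs
  rw [hev.deriv_eq]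
  -- now build derivative of RHS function
  have hAr : HasDerivAt (fun s => φ (u' s)) (φd (u' r) * u'' r) r := hA r hrI
  have h1 : HasDerivAt (fun s => (p - 1) * ψ' s * φ (u' s))
      ((p - 1) * ψ'' r * φ (u' r) + (p - 1) * ψ' r * (φd (u' r) * u'' r)) r := by
    have := ((hψ' r hrI).const_mul (p - 1)).mul hAr
    exact this
  have hc : HasDerivAt (fun s : ℝ => ((n:ℝ) - 1) / s) (((n:ℝ) - 1) * (-(r ^ 2)⁻¹)) r := by
    simpa [div_eq_mul_inv] using (hasDerivAt_inv hr0.ne').const_mul ((n:ℝ) - 1)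
  have h2 : HasDerivAt (fun s => ((n:ℝ) - 1) / s * φ (u' s))
      (((n:ℝ) - 1) * (-(r ^ 2)⁻¹) * φ (u' r) + ((n:ℝ) - 1) / r * (φd (u' r) * u'' r)) r :=
    hc.mul hAr
  have h3 : HasDerivAt (fun s => f (u s)) (deriv f (u r) * u' r) r :=
    ((hf.differentiable one_ne_zero (u r)).hasDerivAt).comp r (hu r hrI)
  have h4 := (h2.neg.sub h3)
  have h5 := (hψ r hrI).mul h4
  have hH : HasDerivAt (fun s => (p - 1) * ψ' s * φ (u' s) + ψ s * (-(((n:ℝ) - 1) / s * φ (u' s)) - f (u s)))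
      ((p - 1) * ψ'' r * φ (u' r) + (p - 1) * ψ' r * (φd (u' r) * u'' r) +
        (ψ' r * (-(((n:ℝ) - 1) / r * φ (u' r)) - f (u r)) +
          ψ r * (-(((n:ℝ) - 1) * -(r ^ 2)⁻¹ * φ (u' r) + ((n:ℝ) - 1) / r * (φd (u' r) * u'' r)) - deriv f (u r) * u' r))) r := h1.add h5
  rw [hH.deriv]
  rw [key r hr, hode' r hr]
  have hr2 : r ^ 2 ≠ 0 := pow_ne_zero 2 hr0.ne'
  field_simp
  ring
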